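/- Let 0 < ℓ < ℓ* and let Υ : ℝ → [0,1] be a smooth nonincreasing function with Υ(t) = 1 for t ≤ ℓ and Υ(t) = 0 for t ≥ ℓ*. For λ ≥ 0 and nonnegative f ∈ L¹([0,1], r dr), define the truncated functional J⁰_λ(u) = (1/2)∫₀¹ [(u'')² + (u')²/r²] r dr + (1/6) Υ( ( ∫₀¹ (u'' + u'/r)² r dr )^{1/2} ) ∫₀¹ (u')³ dr − λ∫₀¹ f u r dr. Then there exist constants C₁, C₂ > 0 (independent of λ, f, u, ℓ, ℓ*) such that every smooth u : [0,1] → ℝ with u'(0) = 0, u(1) = 0, u'(1) = 0 satisfies J⁰_λ(u) ≥ (1/2)X² − C₁X³Υ(X) − C₂ λ ‖f‖_{L¹(r dr)} X, where X = ( ∫₀¹ (u'')² r dr )^{1/2}. In particular J⁰_λ is bounded from below on this class of functions. -/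

import Mathlib

open MeasureTheory Set intervalIntegral

lemma cs_lemma (w : ℝ → ℝ) (hw : Continuous w) {r : ℝ} (hr : 0 < r) (hr1 : r ≤ 1) :
    ∫ s in Ioc r 1, |w s| ≤
      Real.sqrt (∫ s in Ioc r 1, w s ^ 2 * s) * Real.sqrt (Real.log r⁻¹) := by
  set μ := volume.restrict (Ioc r 1) with hμ
  set F : ℝ → ℝ := fun s => Real.sqrt s * |w s| with hF
  set G : ℝ → ℝ := fun s => (Real.sqrt s)⁻¹ with hG
  have hFc : Continuous F := Real.continuous_sqrt.mul hw.abs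
  have hGm : Measurable G := Real.continuous_sqrt.measurable.inv
  have hmeas : MeasurableSet (Ioc r 1) := measurableSet_Ioc
  have hmemF : MemLp F (ENNReal.ofReal 2) μ := by
    rw [show ENNReal.ofReal 2 = 2 by norm_num]
    refine (memLp_two_iff_integrable_sq hFc.aestronglyMeasurable).mpr ?_
    have : IntegrableOn (fun s => F s ^ 2) (Ioc r 1) volume := by
      have := ((hFc.pow 2).intervalIntegrable (μ := volume) r 1)
      rwa [intervalIntegrable_iff_integrableOn_Ioc_of_le hr1] at this
    exact this
  have hGsq : IntegrableOn (fun s => G s ^ 2) (Ioc r 1) volume := by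
    have hco : ContinuousOn (fun s => G s ^ 2) (Icc r 1) := by
      apply ContinuousOn.pow
      apply ContinuousOn.inv₀ (Real.continuous_sqrt.continuousOn)
      intro x hx
      exact (Real.sqrt_pos.mpr (lt_of_lt_of_le hr hx.1)).ne'
    exact (hco.integrableOn_Icc).mono_set Ioc_subset_Icc_self
  have hmemG : MemLp G (ENNReal.ofReal 2) μ := by
    rw [show ENNReal.ofReal 2 = 2 by norm_num]
    exact (memLp_two_iff_integrable_sq hGm.aestronglyMeasurable).mpr hGsq
  have h2 : (2:ℝ).HolderConjugate 2 := Real.HolderConjugate.two_two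
  have hFn : 0 ≤ᵐ[μ] F := Filter.Eventually.of_forall fun s =>
    mul_nonneg (Real.sqrt_nonneg _) (abs_nonneg _)
  have hGn : 0 ≤ᵐ[μ] G := Filter.Eventually.of_forall fun s => inv_nonneg.mpr (Real.sqrt_nonneg _)
  have key := MeasureTheory.integral_mul_le_Lp_mul_Lq_of_nonneg h2 hFn hGn hmemF hmemG
  have hae : ∀ᵐ s ∂μ, s ∈ Ioc r 1 := ae_restrict_mem hmeas
  have e1 : ∫ s, |w s| ∂μ = ∫ s, F s * G s ∂μ := by
    refine integral_congr_ae ?_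
    filter_upwards [hae] with s hs
    have hs0 : 0 < Real.sqrt s := Real.sqrt_pos.mpr (hr.trans hs.1)
    show |w s| = Real.sqrt s * |w s| * (Real.sqrt s)⁻¹
    rw [mul_comm (Real.sqrt s), mul_assoc, mul_inv_cancel₀ hs0.ne', mul_one]
  have e2 : ∫ s, F s ^ (2:ℝ) ∂μ = ∫ s in Ioc r 1, w s ^ 2 * s := by
    refine integral_congr_ae ?_
    filter_upwards [hae] with s hs
    rw [show ((2:ℝ)) = ((2:ℕ):ℝ) by norm_num, Real.rpow_natCast]
    have : (0:ℝ) ≤ s := (hr.trans hs.1).le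
    rw [hF]; simp only [mul_pow, sq_abs, Real.sq_sqrt this]; ring
  have e3 : ∫ s, G s ^ (2:ℝ) ∂μ = Real.log r⁻¹ := by
    have : ∫ s, G s ^ (2:ℝ) ∂μ = ∫ s in Ioc r 1, s⁻¹ := by
      refine integral_congr_ae ?_
      filter_upwards [hae] with s hs
      rw [show ((2:ℝ)) = ((2:ℕ):ℝ) by norm_num, Real.rpow_natCast]
      have : (0:ℝ) ≤ s := (hr.trans hs.1).le
      rw [hG]; rw [inv_pow, sq, Real.mul_self_sqrt this]
    rw [this, ← intervalIntegral.integral_of_le hr1, integral_inv, one_div]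
    intro h
    rw [uIcc_of_le hr1] at h
    exact absurd h.1 (not_le.mpr hr)
  rw [e1] at *
  calc ∫ s, F s * G s ∂μ ≤ (∫ s, F s ^ (2:ℝ) ∂μ) ^ (1/2:ℝ) * (∫ s, G s ^ (2:ℝ) ∂μ) ^ (1/2:ℝ) := key
    _ = _ := by rw [e2, e3, ← Real.sqrt_eq_rpow, ← Real.sqrt_eq_rpow]

lemma ftc_sub {g g' : ℝ → ℝ} (hd : ∀ x, HasDerivAt g (g' x) x) (hc : Continuous g')
    (a b : ℝ) : ∫ x in a..b, g' x = g b - g a :=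
  intervalIntegral.integral_eq_sub_of_hasDerivAt (fun x _ => hd x)
    (hc.intervalIntegrable a b)

lemma log_inv_le {r : ℝ} (hr : 0 < r) : Real.log r⁻¹ ≤ 3 * r ^ (-(1/3):ℝ) := by
  set t := r ^ (-(1/3):ℝ) with ht
  have ht0 : 0 < t := Real.rpow_pos_of_pos hr _
  have hlt : Real.log t = -(1/3) * Real.log r := Real.log_rpow hr _
  have h2 : Real.log t ≤ t - 1 := Real.log_le_sub_one_of_pos ht0
  have h3 : Real.log r⁻¹ = - Real.log r := Real.log_inv r
  linarith

lemma sqrt_log_inv_le {r : ℝ} (hr : 0 < r) :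
    Real.sqrt (Real.log r⁻¹) ≤ Real.sqrt 3 * r ^ (-(1/6):ℝ) := by
  have h1 : Real.sqrt (Real.log r⁻¹) ≤ Real.sqrt (3 * r ^ (-(1/3):ℝ)) :=
    Real.sqrt_le_sqrt (log_inv_le hr)
  have h2 : Real.sqrt (3 * r ^ (-(1/3):ℝ)) = Real.sqrt 3 * Real.sqrt (r ^ (-(1/3):ℝ)) :=
    Real.sqrt_mul (by norm_num) _
  have h3 : Real.sqrt (r ^ (-(1/3):ℝ)) = r ^ (-(1/6):ℝ) := by
    rw [Real.sqrt_eq_rpow, ← Real.rpow_mul hr.le]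
    norm_num
  rw [h2, h3] at h1
  exact h1

lemma sqrt3_le_two : Real.sqrt 3 ≤ 2 := by
  rw [show (2:ℝ) = Real.sqrt 4 by
    rw [show (4:ℝ) = 2^2 by norm_num, Real.sqrt_sq (by norm_num : (0:ℝ) ≤ 2)]]
  exact Real.sqrt_le_sqrt (by norm_num)

section
variable {u : ℝ → ℝ}

lemma deriv_bound (hu : ContDiff ℝ (⊤:ℕ∞) u) (h'0 : deriv u 0 = 0) (h'1 : deriv u 1 = 0)
    {r : ℝ} (hr : r ∈ Icc (0:ℝ) 1) :
    |deriv u r| ≤ Real.sqrt (∫ s in (0:ℝ)..1, (deriv (deriv u) s)^2 * s)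
      * (Real.sqrt 3 * r ^ (-(1/6):ℝ)) := by
  have hv : ContDiff ℝ (⊤:ℕ∞) (deriv u) := (contDiff_infty_iff_deriv.mp hu).2
  have hcv : Continuous (deriv u) := hv.continuous
  have hcw : Continuous (deriv (deriv u)) := (contDiff_infty_iff_deriv.mp hv).2.continuous
  set w := deriv (deriv u) with hw
  set X := Real.sqrt (∫ s in (0:ℝ)..1, w s ^2 * s) with hX
  have hX0 : 0 ≤ X := Real.sqrt_nonneg _
  rcases eq_or_lt_of_le hr.1 with h0 | h0
  · -- r = 0
    rw [← h0, h'0]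
    rw [Real.zero_rpow (by norm_num : (-(1/6):ℝ) ≠ 0)]
    simp
  · -- 0 < r
    have hd : ∀ x, HasDerivAt (deriv u) (w x) x := fun x =>
      ((hv.differentiable (by simp)) x).hasDerivAt
    have hftc : ∫ s in r..1, w s = deriv u 1 - deriv u r := ftc_sub hd hcw r 1
    have hvr : deriv u r = - ∫ s in r..1, w s := by rw [hftc, h'1]; ring
    have h1 : |deriv u r| ≤ ∫ s in r..1, |w s| := by
      rw [hvr, abs_neg]
      simpa [Real.norm_eq_abs] using
        intervalIntegral.norm_integral_le_integral_norm (μ := volume) (f := w) hr.2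
    have h2 : ∫ s in r..1, |w s| = ∫ s in Ioc r 1, |w s| :=
      intervalIntegral.integral_of_le hr.2
    have h3 := cs_lemma w hcw h0 hr.2
    -- compare inner integral with full one
    have hIntw : IntegrableOn (fun s => w s ^2 * s) (Ioc 0 1) volume := by
      have := ((hcw.pow 2).mul continuous_id).intervalIntegrable (μ := volume) 0 1
      rwa [intervalIntegrable_iff_integrableOn_Ioc_of_le zero_le_one] at this
    have h4 : ∫ s in Ioc r 1, w s ^2 * s ≤ ∫ s in Ioc 0 1, w s ^2 * s := by
      refine setIntegral_mono_set hIntw ?_ ?_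
      · exact (ae_restrict_iff' measurableSet_Ioc).mpr
          (Filter.Eventually.of_forall fun s hs => mul_nonneg (sq_nonneg _) hs.1.le)
      · exact Filter.Eventually.of_forall fun s hs => ⟨h0.trans hs.1, hs.2⟩
    have h5 : Real.sqrt (∫ s in Ioc r 1, w s ^2 * s) ≤ X := by
      rw [hX, intervalIntegral.integral_of_le zero_le_one]
      exact Real.sqrt_le_sqrt h4
    calc |deriv u r| ≤ ∫ s in Ioc r 1, |w s| := h2 ▸ h1
      _ ≤ Real.sqrt (∫ s in Ioc r 1, w s ^2 * s) * Real.sqrt (Real.log r⁻¹) := h3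
      _ ≤ X * (Real.sqrt 3 * r ^ (-(1/6):ℝ)) := by
          apply mul_le_mul h5 (sqrt_log_inv_le h0) (Real.sqrt_nonneg _) hX0

lemma cubic_bound (hu : ContDiff ℝ (⊤:ℕ∞) u) (h'0 : deriv u 0 = 0) (h'1 : deriv u 1 = 0) :
    |∫ r in (0:ℝ)..1, (deriv u r)^3| ≤
      16 * Real.sqrt (∫ s in (0:ℝ)..1, (deriv (deriv u) s)^2 * s) ^ 3 := by
  have hv : ContDiff ℝ (⊤:ℕ∞) (deriv u) := (contDiff_infty_iff_deriv.mp hu).2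
  have hcv : Continuous (deriv u) := hv.continuous
  set X := Real.sqrt (∫ s in (0:ℝ)..1, (deriv (deriv u) s)^2 * s) with hX
  have hX0 : 0 ≤ X := Real.sqrt_nonneg _
  have habs : |∫ r in (0:ℝ)..1, (deriv u r)^3| ≤ ∫ r in (0:ℝ)..1, |deriv u r|^3 := by
    have := intervalIntegral.norm_integral_le_integral_norm (μ := volume)
      (f := fun r => (deriv u r)^3) (zero_le_one)
    simpa [Real.norm_eq_abs, abs_pow] using this
  have hrpowInt : IntervalIntegrable (fun r : ℝ => (X * Real.sqrt 3)^3 * r ^ (-(1/2):ℝ))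
      volume 0 1 := by
    apply IntervalIntegrable.const_mul
    exact intervalIntegral.intervalIntegrable_rpow' (by norm_num)
  have hmono : ∫ r in (0:ℝ)..1, |deriv u r|^3 ≤
      ∫ r in (0:ℝ)..1, (X * Real.sqrt 3)^3 * r ^ (-(1/2):ℝ) := by
    refine intervalIntegral.integral_mono_on zero_le_one
      (((hcv.abs.pow 3)).intervalIntegrable 0 1) hrpowInt ?_
    intro r hr
    have hb := deriv_bound hu h'0 h'1 hr
    have h1 : |deriv u r|^3 ≤ (X * (Real.sqrt 3 * r ^ (-(1/6):ℝ)))^3 :=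
      pow_le_pow_left₀ (abs_nonneg _) hb 3
    refine h1.trans (le_of_eq ?_)
    have : (r ^ (-(1/6):ℝ))^(3:ℕ) = r ^ (-(1/2):ℝ) := by
      rw [← Real.rpow_natCast (r ^ (-(1/6):ℝ)) 3, ← Real.rpow_mul hr.1]
      norm_num
    rw [mul_pow, mul_pow, this]
    ring
  have hval : ∫ r in (0:ℝ)..1, (X * Real.sqrt 3)^3 * r ^ (-(1/2):ℝ)
      = (X * Real.sqrt 3)^3 * 2 := by
    rw [intervalIntegral.integral_const_mul, integral_rpow (Or.inl (by norm_num))]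
    rw [Real.one_rpow, Real.zero_rpow (by norm_num : (-(1/2):ℝ) + 1 ≠ 0)]
    norm_num
  have hs3 : Real.sqrt 3 ≤ 2 := sqrt3_le_two
  have hfin : (X * Real.sqrt 3)^3 * 2 ≤ 16 * X^3 := by
    have h1 : (X * Real.sqrt 3)^3 ≤ (X * 2)^3 :=
      pow_le_pow_left₀ (mul_nonneg hX0 (Real.sqrt_nonneg _))
        (mul_le_mul_of_nonneg_left hs3 hX0) 3
    nlinarith [pow_nonneg hX0 3]
  linarith [habs, hmono, hval ▸ hmono]

lemma u_bound (hu : ContDiff ℝ (⊤:ℕ∞) u) (h'0 : deriv u 0 = 0) (h1 : u 1 = 0)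
    (h'1 : deriv u 1 = 0) {r : ℝ} (hr : r ∈ Icc (0:ℝ) 1) :
    |u r| ≤ 3 * Real.sqrt (∫ s in (0:ℝ)..1, (deriv (deriv u) s)^2 * s) := by
  have hv : ContDiff ℝ (⊤:ℕ∞) (deriv u) := (contDiff_infty_iff_deriv.mp hu).2
  have hcv : Continuous (deriv u) := hv.continuous
  set X := Real.sqrt (∫ s in (0:ℝ)..1, (deriv (deriv u) s)^2 * s) with hX
  have hX0 : 0 ≤ X := Real.sqrt_nonneg _
  have hd : ∀ x, HasDerivAt u (deriv u x) x := fun x =>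
    ((hu.differentiable (by simp)) x).hasDerivAt
  have hftc : ∫ s in r..1, deriv u s = u 1 - u r := ftc_sub hd hcv r 1
  have hur : u r = - ∫ s in r..1, deriv u s := by rw [hftc, h1]; ring
  have hb1 : |u r| ≤ ∫ s in r..1, |deriv u s| := by
    rw [hur, abs_neg]
    simpa [Real.norm_eq_abs] using
      intervalIntegral.norm_integral_le_integral_norm (μ := volume) (f := deriv u) hr.2
  rw [intervalIntegral.integral_of_le hr.2] at hb1
  have hg : IntegrableOn (fun s : ℝ => X * Real.sqrt 3 * s ^ (-(1/6):ℝ)) (Ioc 0 1) volume := by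
    have : IntervalIntegrable (fun s : ℝ => X * Real.sqrt 3 * s ^ (-(1/6):ℝ)) volume 0 1 := by
      apply IntervalIntegrable.const_mul
      exact intervalIntegral.intervalIntegrable_rpow' (by norm_num)
    rwa [intervalIntegrable_iff_integrableOn_Ioc_of_le zero_le_one] at this
  have hb2 : ∫ s in Ioc r 1, |deriv u s| ≤
      ∫ s in Ioc r 1, X * Real.sqrt 3 * s ^ (-(1/6):ℝ) := by
    refine setIntegral_mono_on ((hcv.abs.intervalIntegrable (μ := volume) r 1).1)
      (hg.mono_set (Ioc_subset_Ioc_left hr.1)) measurableSet_Ioc ?_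
    intro s hs
    have hb := deriv_bound hu h'0 h'1 ⟨(hr.1.trans hs.1.le), hs.2⟩
    calc |deriv u s| ≤ X * (Real.sqrt 3 * s ^ (-(1/6):ℝ)) := hb
      _ = X * Real.sqrt 3 * s ^ (-(1/6):ℝ) := by ring
  have hb3 : ∫ s in Ioc r 1, X * Real.sqrt 3 * s ^ (-(1/6):ℝ) ≤
      ∫ s in Ioc 0 1, X * Real.sqrt 3 * s ^ (-(1/6):ℝ) := by
    refine setIntegral_mono_set hg ?_
      (Filter.Eventually.of_forall fun s hs => ⟨hr.1.trans_lt hs.1, hs.2⟩)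
    exact (ae_restrict_iff' measurableSet_Ioc).mpr (Filter.Eventually.of_forall fun s hs =>
      mul_nonneg (mul_nonneg hX0 (Real.sqrt_nonneg _)) (Real.rpow_nonneg hs.1.le _))
  have hval : ∫ s in Ioc 0 1, X * Real.sqrt 3 * s ^ (-(1/6):ℝ)
      = X * Real.sqrt 3 * (6/5) := by
    rw [← intervalIntegral.integral_of_le zero_le_one,
      intervalIntegral.integral_const_mul, integral_rpow (Or.inl (by norm_num))]
    rw [Real.one_rpow, Real.zero_rpow (by norm_num : (-(1/6):ℝ) + 1 ≠ 0)]
    norm_num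
  have hs3 : Real.sqrt 3 ≤ 2 := sqrt3_le_two
  nlinarith [hb1, hb2, hb3, hval, hX0, Real.sqrt_nonneg 3]

lemma deriv_linear (hu : ContDiff ℝ (⊤:ℕ∞) u) (h'0 : deriv u 0 = 0) :
    ∃ M : ℝ, 0 ≤ M ∧ ∀ r ∈ Icc (0:ℝ) 1, |deriv u r| ≤ M * r := by
  have hv : ContDiff ℝ (⊤:ℕ∞) (deriv u) := (contDiff_infty_iff_deriv.mp hu).2
  have hcw : Continuous (deriv (deriv u)) := (contDiff_infty_iff_deriv.mp hv).2.continuous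
  obtain ⟨M, hM⟩ := (isCompact_Icc (a := (0:ℝ)) (b := 1)).exists_bound_of_continuousOn
    hcw.continuousOn
  have hM0 : 0 ≤ M := le_trans (norm_nonneg _) (hM 0 ⟨le_refl 0, zero_le_one⟩)
  refine ⟨M, hM0, fun r hr => ?_⟩
  have := Convex.norm_image_sub_le_of_norm_deriv_le (f := deriv u) (s := Icc (0:ℝ) 1)
    (fun x _ => (hv.differentiable (by simp)) x) hM (convex_Icc 0 1)
    ⟨le_refl 0, zero_le_one⟩ hr
  rw [h'0] at this
  simpa [Real.norm_eq_abs, abs_of_nonneg hr.1] using this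

lemma integrable_sq_div (hu : ContDiff ℝ (⊤:ℕ∞) u) (h'0 : deriv u 0 = 0) :
    IntegrableOn (fun r => (deriv u r)^2 / r) (Ioc (0:ℝ) 1) volume := by
  obtain ⟨M, hM0, hM⟩ := deriv_linear hu h'0
  have hv : ContDiff ℝ (⊤:ℕ∞) (deriv u) := (contDiff_infty_iff_deriv.mp hu).2
  have hcv : Continuous (deriv u) := hv.continuous
  refine Measure.integrableOn_of_bounded (M := M^2) (by simp) ?_ ?_
  · exact ((hcv.measurable.pow_const 2).div measurable_id).aestronglyMeasurable
  · refine (ae_restrict_iff' measurableSet_Ioc).mpr (Filter.Eventually.of_forall fun r hr => ?_)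
    have h1 : |deriv u r| ≤ M * r := hM r ⟨hr.1.le, hr.2⟩
    have h2 : (deriv u r)^2 ≤ (M * r)^2 := by
      rw [← sq_abs]; exact pow_le_pow_left₀ (abs_nonneg _) h1 2
    have h3 : (deriv u r)^2 / r ≤ M^2 * r := by
      rw [div_le_iff₀ hr.1]; nlinarith [hr.1]
    have h4 : 0 ≤ (deriv u r)^2 / r := div_nonneg (sq_nonneg _) hr.1.le
    rw [Real.norm_eq_abs, abs_of_nonneg h4]
    nlinarith [hr.1, hr.2, sq_nonneg M]

lemma first_term_ge (hu : ContDiff ℝ (⊤:ℕ∞) u) (h'0 : deriv u 0 = 0) :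
    (∫ r in (0:ℝ)..1, (deriv (deriv u) r)^2 * r) ≤
      ∫ r in (0:ℝ)..1, ((deriv (deriv u) r)^2 + (deriv u r)^2 / r^2) * r := by
  have hv : ContDiff ℝ (⊤:ℕ∞) (deriv u) := (contDiff_infty_iff_deriv.mp hu).2
  have hcv : Continuous (deriv u) := hv.continuous
  have hcw : Continuous (deriv (deriv u)) := (contDiff_infty_iff_deriv.mp hv).2.continuous
  rw [intervalIntegral.integral_of_le zero_le_one, intervalIntegral.integral_of_le zero_le_one]
  have hsmall : IntegrableOn (fun r => (deriv (deriv u) r)^2 * r) (Ioc (0:ℝ) 1) volume := by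
    have := ((hcw.pow 2).mul continuous_id).intervalIntegrable (μ := volume) 0 1
    rwa [intervalIntegrable_iff_integrableOn_Ioc_of_le zero_le_one] at this
  have hdiv := integrable_sq_div hu h'0
  have heq : EqOn (fun r => (deriv (deriv u) r)^2 * r + (deriv u r)^2 / r)
      (fun r => ((deriv (deriv u) r)^2 + (deriv u r)^2 / r^2) * r) (Ioc (0:ℝ) 1) := by
    intro r hr
    have : r ≠ 0 := hr.1.ne'
    field_simp
  have hbig : IntegrableOn (fun r => ((deriv (deriv u) r)^2 + (deriv u r)^2 / r^2) * r)
      (Ioc (0:ℝ) 1) volume := IntegrableOn.congr_fun (hsmall.add hdiv) heq measurableSet_Ioc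
  refine setIntegral_mono_on hsmall hbig measurableSet_Ioc fun r hr => ?_
  rw [add_mul]
  have hr0 : 0 < r := hr.1
  have : 0 ≤ (deriv u r)^2 / r^2 * r := by positivity
  linarith

lemma delta_ge (hu : ContDiff ℝ (⊤:ℕ∞) u) (h'0 : deriv u 0 = 0) (h'1 : deriv u 1 = 0) :
    (∫ r in (0:ℝ)..1, (deriv (deriv u) r)^2 * r) ≤
      ∫ r in (0:ℝ)..1, (deriv (deriv u) r + deriv u r / r)^2 * r := by
  have hv : ContDiff ℝ (⊤:ℕ∞) (deriv u) := (contDiff_infty_iff_deriv.mp hu).2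
  have hcv : Continuous (deriv u) := hv.continuous
  have hcw : Continuous (deriv (deriv u)) := (contDiff_infty_iff_deriv.mp hv).2.continuous
  have hd : ∀ x, HasDerivAt (deriv u) (deriv (deriv u) x) x := fun x =>
    ((hv.differentiable (by simp)) x).hasDerivAt
  rw [intervalIntegral.integral_of_le zero_le_one, intervalIntegral.integral_of_le zero_le_one]
  have hsq : IntegrableOn (fun r => (deriv (deriv u) r)^2 * r) (Ioc (0:ℝ) 1) volume := by
    have := ((hcw.pow 2).mul continuous_id).intervalIntegrable (μ := volume) 0 1
    rwa [intervalIntegrable_iff_integrableOn_Ioc_of_le zero_le_one] at this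
  have hcc : Continuous (fun r : ℝ => 2 * (deriv u r * deriv (deriv u) r)) :=
    continuous_const.mul (hcv.mul hcw)
  have hcross : IntegrableOn (fun r => 2 * (deriv u r * deriv (deriv u) r))
      (Ioc (0:ℝ) 1) volume := by
    have := hcc.intervalIntegrable (μ := volume) 0 1
    rwa [intervalIntegrable_iff_integrableOn_Ioc_of_le zero_le_one] at this
  have hdiv := integrable_sq_div hu h'0
  have heq : EqOn (fun r => (deriv (deriv u) r + deriv u r / r)^2 * r)
      (fun r => ((deriv (deriv u) r)^2 * r + 2 * (deriv u r * deriv (deriv u) r))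
        + (deriv u r)^2 / r) (Ioc (0:ℝ) 1) := by
    intro r hr
    have : r ≠ 0 := hr.1.ne'
    field_simp
    ring
  rw [setIntegral_congr_fun measurableSet_Ioc heq]
  have hAB : Integrable (fun r => deriv (deriv u) r ^2 * r + 2 * (deriv u r * deriv (deriv u) r))
      (volume.restrict (Ioc (0:ℝ) 1)) := hsq.add hcross
  rw [integral_add hAB hdiv, integral_add hsq hcross]
  have hcross0 : ∫ r in Ioc (0:ℝ) 1, 2 * (deriv u r * deriv (deriv u) r) = 0 := by
    rw [← intervalIntegral.integral_of_le zero_le_one]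
    have hd2 : ∀ x, HasDerivAt (fun r => (deriv u r)^2)
        (2 * (deriv u x * deriv (deriv u) x)) x := by
      intro x
      have := (hd x).fun_pow 2
      simpa [mul_comm, mul_assoc, mul_left_comm] using this
    rw [ftc_sub hd2 hcc 0 1, h'0, h'1]
    norm_num
  have hdivpos : 0 ≤ ∫ r in Ioc (0:ℝ) 1, (deriv u r)^2 / r :=
    setIntegral_nonneg measurableSet_Ioc fun r hr => div_nonneg (sq_nonneg _) hr.1.le
  linarith

lemma lin_term (hu : ContDiff ℝ (⊤:ℕ∞) u) (h'0 : deriv u 0 = 0) (h1 : u 1 = 0)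
    (h'1 : deriv u 1 = 0) (f : ℝ → ℝ) (hf0 : ∀ r ∈ Icc (0:ℝ) 1, 0 ≤ f r)
    (hfint : IntegrableOn (fun r => f r * r) (Ioc 0 1) volume) :
    ∫ r in (0:ℝ)..1, f r * u r * r ≤
      3 * Real.sqrt (∫ s in (0:ℝ)..1, (deriv (deriv u) s)^2 * s)
        * ∫ r in (0:ℝ)..1, f r * r := by
  set X := Real.sqrt (∫ s in (0:ℝ)..1, (deriv (deriv u) s)^2 * s) with hX
  have hX0 : 0 ≤ X := Real.sqrt_nonneg _
  rw [intervalIntegral.integral_of_le zero_le_one, intervalIntegral.integral_of_le zero_le_one]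
  have hfu_eq : (fun r => f r * u r * r) = fun r => (f r * r) * u r := funext fun r => by ring
  have hgint : IntegrableOn (fun r => 3 * X * (f r * r)) (Ioc (0:ℝ) 1) volume :=
    hfint.const_mul _
  have hmeas : AEStronglyMeasurable (fun r => (f r * r) * u r)
      (volume.restrict (Ioc (0:ℝ) 1)) :=
    hfint.aestronglyMeasurable.mul hu.continuous.aestronglyMeasurable
  have hintfu : IntegrableOn (fun r => (f r * r) * u r) (Ioc (0:ℝ) 1) volume := by
    refine Integrable.mono' hgint hmeas ?_
    refine (ae_restrict_iff' measurableSet_Ioc).mpr (Filter.Eventually.of_forall fun r hr => ?_)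
    have hfr : 0 ≤ f r * r := mul_nonneg (hf0 r ⟨hr.1.le, hr.2⟩) hr.1.le
    have hub : |u r| ≤ 3 * X := u_bound hu h'0 h1 h'1 ⟨hr.1.le, hr.2⟩
    rw [Real.norm_eq_abs, abs_mul, abs_of_nonneg hfr]
    calc (f r * r) * |u r| ≤ (f r * r) * (3 * X) := mul_le_mul_of_nonneg_left hub hfr
      _ = 3 * X * (f r * r) := by ring
  rw [hfu_eq]
  have hmono : ∫ r in Ioc (0:ℝ) 1, (f r * r) * u r ≤
      ∫ r in Ioc (0:ℝ) 1, 3 * X * (f r * r) := by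
    refine setIntegral_mono_on hintfu hgint measurableSet_Ioc fun r hr => ?_
    have hfr : 0 ≤ f r * r := mul_nonneg (hf0 r ⟨hr.1.le, hr.2⟩) hr.1.le
    have hub : u r ≤ 3 * X := (le_abs_self _).trans (u_bound hu h'0 h1 h'1 ⟨hr.1.le, hr.2⟩)
    calc (f r * r) * u r ≤ (f r * r) * (3 * X) := mul_le_mul_of_nonneg_left hub hfr
      _ = 3 * X * (f r * r) := by ring
  rw [MeasureTheory.integral_const_mul] at hmono
  exact hmono

end


/-- The truncated energy functional `J⁰_λ`, in which the cubic term is multiplied by a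
cutoff `Υ` evaluated at the `L²(r dr)` norm of the radial Laplacian `Δu = u'' + u'/r`. -/
noncomputable def J0fun (Υ : ℝ → ℝ) (lam : ℝ) (f u : ℝ → ℝ) : ℝ :=
  (1 / 2) * (∫ r in (0:ℝ)..1, ((deriv (deriv u) r) ^ 2 + (deriv u r) ^ 2 / r ^ 2) * r)
    + (1 / 6)
      * Υ (Real.sqrt (∫ r in (0:ℝ)..1, (deriv (deriv u) r + deriv u r / r) ^ 2 * r))
      * (∫ r in (0:ℝ)..1, (deriv u r) ^ 3)
    - lam * ∫ r in (0:ℝ)..1, f r * u r * r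

lemma key_ineq (Υ : ℝ → ℝ) (hΥa : Antitone Υ) (hΥm : ∀ t : ℝ, Υ t ∈ Icc (0:ℝ) 1)
    (lam : ℝ) (hlam : 0 ≤ lam) (f : ℝ → ℝ) (hf0 : ∀ r ∈ Icc (0:ℝ) 1, 0 ≤ f r)
    (hfint : IntegrableOn (fun r => f r * r) (Ioc 0 1) volume)
    (u : ℝ → ℝ) (hu : ContDiff ℝ (⊤ : ℕ∞) u)
    (h'0 : deriv u 0 = 0) (h1 : u 1 = 0) (h'1 : deriv u 1 = 0)
    (X : ℝ) (hX : X = Real.sqrt (∫ r in (0:ℝ)..1, (deriv (deriv u) r) ^ 2 * r)) :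
    (1 / 2) * X ^ 2 - 3 * X ^ 3 * Υ X - 3 * lam * (∫ r in (0:ℝ)..1, f r * r) * X
      ≤ J0fun Υ lam f u := by
  have hX0 : 0 ≤ X := hX ▸ Real.sqrt_nonneg _
  have hX2nn : 0 ≤ ∫ r in (0:ℝ)..1, (deriv (deriv u) r) ^ 2 * r :=
    intervalIntegral.integral_nonneg zero_le_one fun r hr => mul_nonneg (sq_nonneg _) hr.1
  have hXsq : X ^ 2 = ∫ r in (0:ℝ)..1, (deriv (deriv u) r) ^ 2 * r := by
    rw [hX, Real.sq_sqrt hX2nn]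
  have hA := first_term_ge hu h'0
  have hD := delta_ge hu h'0 h'1
  have hY : Υ (Real.sqrt (∫ r in (0:ℝ)..1, (deriv (deriv u) r + deriv u r / r) ^ 2 * r))
      ≤ Υ X := by
    apply hΥa
    rw [hX]
    exact Real.sqrt_le_sqrt hD
  set B := Υ (Real.sqrt (∫ r in (0:ℝ)..1, (deriv (deriv u) r + deriv u r / r) ^ 2 * r))
    with hB
  have hB0 : 0 ≤ B := (hΥm _).1
  have hYX0 : 0 ≤ Υ X := (hΥm _).1
  have hI3 : |∫ r in (0:ℝ)..1, (deriv u r)^3| ≤ 16 * X ^ 3 := by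
    rw [hX]; exact cubic_bound hu h'0 h'1
  have hlin : ∫ r in (0:ℝ)..1, f r * u r * r ≤
      3 * X * ∫ r in (0:ℝ)..1, f r * r := by
    rw [hX]; exact lin_term hu h'0 h1 h'1 f hf0 hfint
  set I3 := ∫ r in (0:ℝ)..1, (deriv u r)^3 with hI3e
  have a1 : -(B * |I3|) ≤ B * I3 := by
    have := mul_le_mul_of_nonneg_left (neg_abs_le I3) hB0
    linarith [this]
  have a2 : B * |I3| ≤ Υ X * |I3| := mul_le_mul_of_nonneg_right hY (abs_nonneg _)
  have a3 : Υ X * |I3| ≤ Υ X * (16 * X ^ 3) := mul_le_mul_of_nonneg_left hI3 hYX0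
  have a4 : 0 ≤ X ^ 3 * Υ X := mul_nonneg (pow_nonneg hX0 3) hYX0
  have t3 : lam * (∫ r in (0:ℝ)..1, f r * u r * r) ≤
      lam * (3 * X * ∫ r in (0:ℝ)..1, f r * r) := mul_le_mul_of_nonneg_left hlin hlam
  rw [J0fun]
  nlinarith [a1, a2, a3, a4, t3, hA, hXsq]


/-- Radial lower bound for the truncated functional `J⁰_λ`; in particular it is bounded
from below on the class of smooth functions satisfying the Dirichlet boundary
conditions. -/
theorem stmt10 :
    ∃ C₁ > (0:ℝ), ∃ C₂ > (0:ℝ),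
      ∀ ℓ ℓs : ℝ, 0 < ℓ → ℓ < ℓs →
      ∀ Υ : ℝ → ℝ, ContDiff ℝ (⊤ : ℕ∞) Υ → Antitone Υ →
        (∀ t : ℝ, Υ t ∈ Icc (0:ℝ) 1) →
        (∀ t : ℝ, t ≤ ℓ → Υ t = 1) → (∀ t : ℝ, ℓs ≤ t → Υ t = 0) →
      ∀ lam : ℝ, 0 ≤ lam → ∀ f : ℝ → ℝ,
        (∀ r ∈ Icc (0:ℝ) 1, 0 ≤ f r) →
        IntegrableOn (fun r => f r * r) (Ioc 0 1) volume →
        (∀ u : ℝ → ℝ, ContDiff ℝ (⊤ : ℕ∞) u →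
          deriv u 0 = 0 → u 1 = 0 → deriv u 1 = 0 →
          ∀ X : ℝ, X = Real.sqrt (∫ r in (0:ℝ)..1, (deriv (deriv u) r) ^ 2 * r) →
            (1 / 2) * X ^ 2 - C₁ * X ^ 3 * Υ X
                - C₂ * lam * (∫ r in (0:ℝ)..1, f r * r) * X
              ≤ J0fun Υ lam f u)
        ∧ ∃ m : ℝ, ∀ u : ℝ → ℝ, ContDiff ℝ (⊤ : ℕ∞) u →
            deriv u 0 = 0 → u 1 = 0 → deriv u 1 = 0 →
            m ≤ J0fun Υ lam f u := by
  refine ⟨3, by norm_num, 3, by norm_num, ?_⟩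
  intro ℓ ℓs hℓ hℓℓs Υ hΥc hΥa hΥm hΥ1 hΥ0 lam hlam f hf0 hfint
  constructor
  · intro u hu h'0 h1 h'1 X hX
    exact key_ineq Υ hΥa hΥm lam hlam f hf0 hfint u hu h'0 h1 h'1 X hX
  · set Nf := ∫ r in (0:ℝ)..1, f r * r with hNf
    have hNf0 : 0 ≤ Nf :=
      intervalIntegral.integral_nonneg zero_le_one fun r hr => mul_nonneg (hf0 r hr) hr.1
    have hℓs0 : 0 < ℓs := hℓ.trans hℓℓs
    refine ⟨-3 * ℓs ^ 3 - (3 * lam * Nf) ^ 2 / 2, ?_⟩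
    intro u hu h'0 h1 h'1
    set X := Real.sqrt (∫ r in (0:ℝ)..1, (deriv (deriv u) r) ^ 2 * r) with hX
    have hX0 : 0 ≤ X := Real.sqrt_nonneg _
    have key := key_ineq Υ hΥa hΥm lam hlam f hf0 hfint u hu h'0 h1 h'1 X hX
    have hXY : X ^ 3 * Υ X ≤ ℓs ^ 3 := by
      rcases le_or_gt X ℓs with h | h
      · calc X ^ 3 * Υ X ≤ X ^ 3 * 1 :=
              mul_le_mul_of_nonneg_left (hΥm X).2 (pow_nonneg hX0 3)
          _ = X ^ 3 := mul_one _
          _ ≤ ℓs ^ 3 := pow_le_pow_left₀ hX0 h 3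
      · rw [hΥ0 X h.le, mul_zero]
        positivity
    have h6 : -((3 * lam * Nf) ^ 2 / 2) ≤ (1/2) * X ^ 2 - 3 * lam * Nf * X := by
      nlinarith [sq_nonneg (X - 3 * lam * Nf)]
    nlinarith [key, hXY, h6]
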